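/- For every natural number n ≥ 5, the restricted wreath product G = (Equiv.Perm (Fin n)) ≀ ℤ of the symmetric group S_n with ℤ is not virtually solvable (every subgroup of finite index in G fails to be solvable), and G satisfies the law ⁅x, y⁆^{n!} = 1 for all x, y ∈ G. -/

import Mathlib

/-- The restricted direct product `Π₀ i : ℤ, H`: the subgroup of `ℤ → H`
consisting of the finitely supported functions (pointwise multiplication). -/
def RestrictedProductZ (H : Type*) [Group H] : Subgroup (ℤ → H) where
  carrier := {f | (Function.mulSupport f).Finite}
  one_mem' := by simp [Function.mulSupport_one]
  mul_mem' := by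
    intro f g hf hg
    exact ((hf.union hg).subset (Function.mulSupport_mul f g))
  inv_mem' := by
    intro f hf
    simpa [Function.mulSupport_inv] using hf

/-- The shift automorphism of the restricted product: `(n • f) i = f (i - n)`. -/
def shiftAut (H : Type*) [Group H] (n : ℤ) : MulAut (RestrictedProductZ H) where
  toFun f := ⟨fun i => (f : ℤ → H) (i - n), by
    refine (f.2.image (· + n)).subset ?_
    intro i hi
    exact ⟨i - n, hi, by ring⟩⟩
  invFun f := ⟨fun i => (f : ℤ → H) (i + n), by
    refine (f.2.image (· - n)).subset ?_
    intro i hi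
    exact ⟨i + n, hi, by ring⟩⟩
  left_inv f := by ext i; simp
  right_inv f := by ext i; simp
  map_mul' f g := by ext i; rfl

/-- The action of `ℤ` (as `Multiplicative ℤ`) on the restricted product by shift
automorphisms. -/
def shiftHom (H : Type*) [Group H] :
    Multiplicative ℤ →* MulAut (RestrictedProductZ H) where
  toFun n := shiftAut H n.toAdd
  map_one' := by
    ext f i
    show (f : ℤ → H) (i - 0) = (f : ℤ → H) i
    rw [sub_zero]
  map_mul' m n := by
    ext f i
    show (f : ℤ → H) (i - (m.toAdd + n.toAdd)) = (f : ℤ → H) (i - m.toAdd - n.toAdd)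
    rw [sub_sub]

/-- The restricted wreath product `H ≀ ℤ`, as the semidirect product of the
restricted direct product `Π₀ i : ℤ, H` with `ℤ` acting by shifts. -/
abbrev WreathProductZ (H : Type*) [Group H] :=
  RestrictedProductZ H ⋊[shiftHom H] Multiplicative ℤ

section Helpers

variable {H : Type*} [Group H]

/-- The function supported at two integer coordinates, as an element of the
restricted product. -/
def pairElt (i k : ℤ) (p : H × H) : RestrictedProductZ H :=
  ⟨fun j => if j = i then p.1 else if j = k then p.2 else 1, by
    refine ((Set.finite_singleton k).insert i).subset ?_
    intro j hj
    rw [Function.mem_mulSupport] at hj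
    by_contra h
    simp only [Set.mem_insert_iff, Set.mem_singleton_iff, not_or] at h
    simp [h.1, h.2] at hj⟩

/-- `pairElt` as a group homomorphism. -/
def pairHom (i k : ℤ) : H × H →* RestrictedProductZ H where
  toFun := pairElt i k
  map_one' := by
    apply Subtype.ext; funext j
    show (if j = i then (1:H) else if j = k then 1 else 1) = 1
    split_ifs <;> rfl
  map_mul' p q := by
    apply Subtype.ext; funext j
    show (if j = i then p.1 * q.1 else if j = k then p.2 * q.2 else 1)
      = (if j = i then p.1 else if j = k then p.2 else 1)
        * (if j = i then q.1 else if j = k then q.2 else 1)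
    split_ifs <;> simp

/-- The embedding of `H` at a single coordinate, as a homomorphism into the
restricted product. -/
def singleHom (i : ℤ) : H →* RestrictedProductZ H :=
  (pairHom i i).comp (MonoidHom.inl H H)

lemma single_mul_single {j k : ℤ} (hjk : j ≠ k) (σ τ : H) :
    singleHom j σ * singleHom k τ = pairHom j k (σ, τ) := by
  apply Subtype.ext; funext t
  show (if t = j then σ else if t = j then 1 else 1)
      * (if t = k then τ else if t = k then 1 else 1)
    = (if t = j then σ else if t = k then τ else 1)
  split_ifs with h1 h2 h2 <;> simp_all

lemma pair_one_left {j k : ℤ} (hjk : j ≠ k) (τ : H) :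
    pairHom j k ((1 : H), τ) = singleHom k τ := by
  apply Subtype.ext; funext t
  show (if t = j then (1:H) else if t = k then τ else 1)
    = (if t = k then τ else if t = k then 1 else 1)
  split_ifs with h1 h2 <;> simp_all

/-- The embedding of `H` at a single coordinate of the wreath product. -/
def WEhom (i : ℤ) : H →* WreathProductZ H :=
  (SemidirectProduct.inl).comp (singleHom i)

/-- The embedding of `H × H` at two coordinates of the wreath product. -/
def WPhom (i k : ℤ) : H × H →* WreathProductZ H :=
  (SemidirectProduct.inl).comp (pairHom i k)

lemma WE_mul_WE {j k : ℤ} (hjk : j ≠ k) (σ τ : H) :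
    WEhom j σ * WEhom k τ = WPhom j k (σ, τ) := by
  unfold WEhom WPhom
  rw [MonoidHom.comp_apply, MonoidHom.comp_apply, MonoidHom.comp_apply,
    ← map_mul, single_mul_single hjk]

lemma WP_one_left {j k : ℤ} (hjk : j ≠ k) (τ : H) :
    WPhom j k ((1 : H), τ) = WEhom k τ := by
  unfold WEhom WPhom
  rw [MonoidHom.comp_apply, MonoidHom.comp_apply, pair_one_left hjk]

lemma WE_injective (i : ℤ) : Function.Injective (WEhom (H := H) i) := by
  intro σ τ h
  have h2 := congrArg (fun g : WreathProductZ H => ((SemidirectProduct.left g : RestrictedProductZ H) : ℤ → H) i) h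
  simpa [WEhom, singleHom, pairHom, pairElt, SemidirectProduct.left_inl] using h2

end Helpers

open scoped commutatorElement

/-- For `n ≥ 5`, the restricted wreath product `S_n ≀ ℤ` of the symmetric group on
`n` letters with `ℤ` is not virtually solvable (no finite-index subgroup is solvable),
yet it satisfies the law `⁅x, y⁆ ^ n! = 1`. -/
theorem symmetric_wreath_product_example (n : ℕ) (hn : 5 ≤ n) :
    (∀ G : Subgroup (WreathProductZ (Equiv.Perm (Fin n))), G.index ≠ 0 → ¬ IsSolvable G) ∧
      (∀ x y : WreathProductZ (Equiv.Perm (Fin n)), ⁅x, y⁆ ^ (n.factorial) = 1) := by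
  constructor
  · -- no finite-index subgroup is solvable
    intro K hK hsol
    haveI : K.FiniteIndex := ⟨hK⟩
    set N := K.normalCore with hN
    haveI hNnorm : N.Normal := Subgroup.normalCore_normal K
    haveI : N.FiniteIndex := K.finiteIndex_normalCore
    haveI : Finite (WreathProductZ (Equiv.Perm (Fin n)) ⧸ N) :=
      N.finite_quotient_of_finiteIndex
    -- the basic non-solvability witnesses, transported from `Perm (Fin 5)`
    obtain ⟨x, y, z, key_n, hx1⟩ : ∃ x y z : Equiv.Perm (Fin n),
        x = z * ⁅x, y * x * y⁻¹⁆ * z⁻¹ ∧ x ≠ 1 := by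
      let x5 : Equiv.Perm (Fin 5) := ⟨![1, 2, 0, 3, 4], ![2, 0, 1, 3, 4], by decide, by decide⟩
      let y5 : Equiv.Perm (Fin 5) := ⟨![3, 4, 2, 0, 1], ![3, 4, 2, 0, 1], by decide, by decide⟩
      let z5 : Equiv.Perm (Fin 5) := ⟨![0, 3, 2, 1, 4], ![0, 3, 2, 1, 4], by decide, by decide⟩
      have key5 : x5 = z5 * ⁅x5, y5 * x5 * y5⁻¹⁆ * z5⁻¹ := by unfold x5 y5 z5; decide
      have hx5 : x5 ≠ 1 := by decide
      let emb : Fin 5 ↪ Fin n := Fin.castLEEmb hn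
      let φ : Equiv.Perm (Fin 5) →* Equiv.Perm (Fin n) := Equiv.Perm.viaEmbeddingHom emb
      refine ⟨φ x5, φ y5, φ z5, ?_, ?_⟩
      · conv_lhs => rw [key5]
        rw [map_mul, map_mul, map_inv, map_commutatorElement, map_mul, map_mul, map_inv]
      · intro h
        exact hx5 (Equiv.Perm.viaEmbeddingHom_injective emb (h.trans (map_one φ).symm))
    set G := WreathProductZ (Equiv.Perm (Fin n))
    let E : ℤ → Equiv.Perm (Fin n) →* G := fun i => WEhom i
    -- pigeonhole: two coordinates land in the same coset of N
    obtain ⟨j, k, hjk, hcos⟩ :=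
      Finite.exists_ne_map_eq_of_infinite
        (fun a : ℤ => ((E a x : G) : WreathProductZ (Equiv.Perm (Fin n)) ⧸ N))
    have hg0 : (E j x)⁻¹ * E k x ∈ N := QuotientGroup.eq.mp hcos
    -- the commutator chain of subgroups starting from N
    let D : ℕ → Subgroup G := fun m => Nat.rec N (fun _ Di => ⁅Di, Di⁆) m
    have hD0 : D 0 = N := rfl
    have hDsucc : ∀ i, D (i + 1) = ⁅D i, D i⁆ := fun _ => rfl
    have hDnorm : ∀ i, (D i).Normal := by
      intro i
      induction i with
      | zero => exact hNnorm
      | succ i ih => exact @Subgroup.commutator_normal G _ (D i) (D i) ih ih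
    have conj_mem : ∀ (i : ℕ) (g c : G), g ∈ D i → c * g * c⁻¹ ∈ D i :=
      fun i g c hg => (hDnorm i).conj_mem g hg c
    -- key conjugation: from the commutator element one recovers `E k x`
    have key_conj : ∀ i : ℕ, E k ⁅x, y * x * y⁻¹⁆ ∈ D i → E k x ∈ D i := by
      intro i hi
      have h4 := conj_mem i _ (E k z) hi
      rwa [← map_inv, ← map_mul, ← map_mul, ← key_n] at h4
    -- base: E k x ∈ D 1
    have base : E k x ∈ D 1 := by
      have hgP : (E j x)⁻¹ * E k x = WPhom j k (x⁻¹, x) := by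
        rw [← map_inv, WE_mul_WE hjk]
      have hg0' : WPhom j k (x⁻¹, x) ∈ D 0 := by rw [← hgP]; exact hg0
      have hh0 : WPhom j k (x⁻¹, y * x * y⁻¹) ∈ D 0 := by
        have h := conj_mem 0 _ (WPhom j k ((1 : Equiv.Perm (Fin n)), y)) hg0'
        rw [← map_inv, ← map_mul, ← map_mul] at h
        have hpair : ((1 : Equiv.Perm (Fin n)), y) * (x⁻¹, x) * ((1 : Equiv.Perm (Fin n)), y)⁻¹
            = ((x⁻¹ : Equiv.Perm (Fin n)), y * x * y⁻¹) := by
          simp [Prod.ext_iff]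
        rwa [hpair] at h
      have hcomm : ⁅WPhom j k (x⁻¹, x), WPhom j k (x⁻¹, y * x * y⁻¹)⁆ ∈ D 1 :=
        Subgroup.commutator_mem_commutator hg0' hh0
      rw [← map_commutatorElement] at hcomm
      have hpair2 : (⁅((x⁻¹ : Equiv.Perm (Fin n)), x), (x⁻¹, y * x * y⁻¹)⁆ :
          Equiv.Perm (Fin n) × Equiv.Perm (Fin n)) = (1, ⁅x, y * x * y⁻¹⁆) := by
        rw [show (⁅((x⁻¹ : Equiv.Perm (Fin n)), x), (x⁻¹, y * x * y⁻¹)⁆ :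
            Equiv.Perm (Fin n) × Equiv.Perm (Fin n))
          = (⁅x⁻¹, x⁻¹⁆, ⁅x, y * x * y⁻¹⁆) from rfl, commutatorElement_self]
      rw [hpair2, WP_one_left hjk] at hcomm
      exact key_conj 1 hcomm
    -- induction: E k x ∈ D (i + 1) for all i
    have main : ∀ i : ℕ, E k x ∈ D (i + 1) := by
      intro i
      induction i with
      | zero => exact base
      | succ i ih =>
        have h2 : E k (y * x * y⁻¹) ∈ D (i + 1) := by
          have h := conj_mem (i + 1) _ (E k y) ih
          rwa [← map_inv, ← map_mul, ← map_mul] at h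
        have h3 : ⁅E k x, E k (y * x * y⁻¹)⁆ ∈ D (i + 2) :=
          Subgroup.commutator_mem_commutator ih h2
        rw [← map_commutatorElement] at h3
        exact key_conj (i + 2) h3
    -- solvability of K would kill the chain
    haveI hsolN : IsSolvable N :=
      by haveI : Group.IsSolvable K := hsol; exact solvable_of_solvable_injective (Subgroup.inclusion_injective (Subgroup.normalCore_le K))
    obtain ⟨m, hm⟩ := (isSolvable_def _).mp hsolN
    have hle : ∀ i, D i ≤ (derivedSeries N i).map N.subtype := by
      intro i
      induction i with
      | zero =>
        rw [hD0, derivedSeries_zero, ← MonoidHom.range_eq_map, Subgroup.range_subtype]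
      | succ i ih =>
        rw [hDsucc i, derivedSeries_succ, Subgroup.map_commutator]
        exact Subgroup.commutator_mono ih ih
    have hbot := hle (m + 1) (main m)
    rw [derivedSeries_succ, hm, Subgroup.commutator_bot_left, Subgroup.map_bot,
      Subgroup.mem_bot] at hbot
    exact hx1 (WE_injective k (by rw [hbot, map_one]))
  · -- the law ⁅x, y⁆ ^ n! = 1
    intro x y
    have hker : ⁅x, y⁆ ∈ (SemidirectProduct.inl :
        RestrictedProductZ (Equiv.Perm (Fin n)) →* WreathProductZ (Equiv.Perm (Fin n))).range := by
      rw [SemidirectProduct.range_inl_eq_ker_rightHom, MonoidHom.mem_ker, map_commutatorElement]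
      exact commutatorElement_eq_one_iff_mul_comm.mpr (mul_comm _ _)
    obtain ⟨f, hf⟩ := hker
    rw [← hf, ← map_pow]
    have hfpow : f ^ n.factorial = 1 := by
      apply Subtype.ext; funext i
      show ((f : ℤ → Equiv.Perm (Fin n)) i) ^ n.factorial = 1
      have hcard : Fintype.card (Equiv.Perm (Fin n)) = n.factorial := by
        rw [Fintype.card_perm, Fintype.card_fin]
      rw [← hcard]
      exact pow_card_eq_one
    rw [hfpow, map_one]
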